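/- arXiv:2309.15083 — 13 statements merged into one kernel-verified Lean document; each statement's English description precedes it below -/
import Mathlib

section
/- Let J1, J2, J3 be ideals in a commutative ring R such that (J1 + J2)^2 ⊆ J2^2. Then for all positive integers n, (J1 + J2 + J3)^n = J1 * J3^(n-1) + (J2 + J3)^n. -/
set_option maxHeartbeats 1000000

theorem stmt0 {R : Type*} [CommRing R] (J1 J2 J3 : Ideal R)
    (h : (J1 + J2) ^ 2 ≤ J2 ^ 2) :
    ∀ n : ℕ, 0 < n → (J1 + J2 + J3) ^ n = J1 * J3 ^ (n - 1) + (J2 + J3) ^ n := by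
  have h11 : J1 * J1 ≤ J2 ^ 2 := le_trans (by rw [sq]; exact Ideal.mul_mono le_sup_left le_sup_left) h
  have h12 : J1 * J2 ≤ J2 ^ 2 := le_trans (by rw [sq]; exact Ideal.mul_mono le_sup_left le_sup_right) h
  have hJ1 : J1 ≤ J1 + J2 + J3 := le_sup_of_le_left le_sup_left
  have hJ3 : J3 ≤ J1 + J2 + J3 := le_sup_right
  have hJ23 : J2 + J3 ≤ J1 + J2 + J3 := sup_le (le_sup_of_le_left le_sup_right) le_sup_right
  have key : ∀ n : ℕ, J1 * (J2 + J3) ^ n ≤ J1 * J3 ^ n + (J2 + J3) ^ (n + 1) := by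
    intro n
    induction n with
    | zero => simp
    | succ n ih =>
      calc J1 * (J2 + J3) ^ (n + 1) = J1 * J2 * (J2 + J3) ^ n + J3 * (J1 * (J2 + J3) ^ n) := by ring
        _ ≤ J2 ^ 2 * (J2 + J3) ^ n + J3 * (J1 * J3 ^ n + (J2 + J3) ^ (n + 1)) :=
            sup_le_sup (Ideal.mul_mono h12 le_rfl) (Ideal.mul_mono le_rfl ih)
        _ ≤ J1 * J3 ^ (n + 1) + (J2 + J3) ^ (n + 2) := by
            apply sup_le
            · calc J2 ^ 2 * (J2 + J3) ^ n ≤ (J2 + J3) ^ 2 * (J2 + J3) ^ n :=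
                    Ideal.mul_mono (pow_le_pow_left' le_sup_left 2) le_rfl
                _ = (J2 + J3) ^ (n + 2) := by ring
                _ ≤ J1 * J3 ^ (n + 1) + (J2 + J3) ^ (n + 2) := le_sup_right
            · rw [mul_add]
              apply sup_le
              · calc J3 * (J1 * J3 ^ n) = J1 * J3 ^ (n + 1) := by ring
                  _ ≤ _ := le_sup_left
              · calc J3 * (J2 + J3) ^ (n + 1) ≤ (J2 + J3) * (J2 + J3) ^ (n + 1) :=
                      Ideal.mul_mono le_sup_right le_rfl
                  _ = (J2 + J3) ^ (n + 2) := by ring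
                  _ ≤ _ := le_sup_right
  have main : ∀ m : ℕ, (J1 + J2 + J3) ^ (m + 1) = J1 * J3 ^ m + (J2 + J3) ^ (m + 1) := by
    intro m
    induction m with
    | zero => simp [sup_assoc]
    | succ m ih =>
      apply le_antisymm
      · calc (J1 + J2 + J3) ^ (m + 2) = (J1 + J2 + J3) * (J1 + J2 + J3) ^ (m + 1) := by ring
          _ = (J1 + J2 + J3) * (J1 * J3 ^ m + (J2 + J3) ^ (m + 1)) := by rw [ih]
          _ = J1 * J1 * J3 ^ m + J2 * (J1 * J3 ^ m) + J3 * (J1 * J3 ^ m)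
              + J1 * (J2 + J3) ^ (m + 1) + (J2 + J3) * (J2 + J3) ^ (m + 1) := by ring
          _ ≤ J1 * J3 ^ (m + 1) + (J2 + J3) ^ (m + 2) := by
              apply sup_le; apply sup_le; apply sup_le; apply sup_le
              · calc J1 * J1 * J3 ^ m ≤ (J2 + J3) ^ 2 * (J2 + J3) ^ m :=
                      Ideal.mul_mono (h11.trans (pow_le_pow_left' le_sup_left 2)) (pow_le_pow_left' le_sup_right m)
                  _ = (J2 + J3) ^ (m + 2) := by ring
                  _ ≤ _ := le_sup_right
              · calc J2 * (J1 * J3 ^ m) = J1 * J2 * J3 ^ m := by ring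
                  _ ≤ (J2 + J3) ^ 2 * (J2 + J3) ^ m :=
                      Ideal.mul_mono (h12.trans (pow_le_pow_left' le_sup_left 2)) (pow_le_pow_left' le_sup_right m)
                  _ = (J2 + J3) ^ (m + 2) := by ring
                  _ ≤ _ := le_sup_right
              · calc J3 * (J1 * J3 ^ m) = J1 * J3 ^ (m + 1) := by ring
                  _ ≤ _ := le_sup_left
              · exact key (m + 1)
              · calc (J2 + J3) * (J2 + J3) ^ (m + 1) = (J2 + J3) ^ (m + 2) := by ring
                  _ ≤ _ := le_sup_right
      · apply sup_le
        · calc J1 * J3 ^ (m + 1) ≤ (J1 + J2 + J3) * (J1 + J2 + J3) ^ (m + 1) :=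
                Ideal.mul_mono hJ1 (pow_le_pow_left' hJ3 (m + 1))
            _ = (J1 + J2 + J3) ^ (m + 2) := by ring
        · exact pow_le_pow_left' hJ23 (m + 2)
  intro n hn
  obtain ⟨m, rfl⟩ := Nat.exists_eq_add_of_lt hn
  simpa using main m
end

section
/- Let J1, J2, J3 be ideals in a commutative ring R with (J1 + J2)^2 ⊆ J2^2. Then for all n ≥ 2, (J1 + J2 + J3)^n = (J1 + J2 + J3) * (J1 * J3^(n-2) + (J2 + J3)^(n-1)). -/
theorem stmt1 {R : Type*} [CommRing R] (J1 J2 J3 : Ideal R)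
    (h : (J1 + J2) ^ 2 ≤ J2 ^ 2) :
    ∀ n : ℕ, 2 ≤ n →
      (J1 + J2 + J3) ^ n
        = (J1 + J2 + J3) * (J1 * J3 ^ (n - 2) + (J2 + J3) ^ (n - 1)) := by
  have h11 : J1 * J1 ≤ J2 ^ 2 :=
    le_trans (le_trans (Ideal.mul_mono le_sup_left le_sup_left) (sq (J1 + J2)).symm.le) h
  have h12 : J1 * J2 ≤ J2 ^ 2 :=
    le_trans (le_trans (Ideal.mul_mono le_sup_left le_sup_right) (sq (J1 + J2)).symm.le) h
  have hpow : ∀ k : ℕ, J2 ^ 2 * J3 ^ k ≤ (J2 + J3) ^ (k + 2) := by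
    intro k
    calc J2 ^ 2 * J3 ^ k ≤ (J2 + J3) ^ 2 * (J2 + J3) ^ k :=
          Ideal.mul_mono (pow_le_pow_left' le_sup_left 2) (pow_le_pow_left' le_sup_right k)
      _ = (J2 + J3) ^ (k + 2) := by ring
  have hL : ∀ k : ℕ, J1 * (J2 + J3) ^ k ≤ J1 * J3 ^ k + (J2 + J3) ^ (k + 1) := by
    intro k
    induction k with
    | zero => simp
    | succ k ih =>
      calc J1 * (J2 + J3) ^ (k + 1) = J1 * (J2 + J3) ^ k * (J2 + J3) := by ring
        _ ≤ (J1 * J3 ^ k + (J2 + J3) ^ (k + 1)) * (J2 + J3) := Ideal.mul_mono ih le_rfl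
        _ = J1 * J2 * J3 ^ k + (J1 * J3 ^ (k + 1) + (J2 + J3) ^ (k + 2)) := by ring
        _ ≤ J1 * J3 ^ (k + 1) + (J2 + J3) ^ (k + 2) := by
            rw [Ideal.add_eq_sup]
            refine sup_le ?_ le_rfl
            refine le_trans ?_ le_sup_right
            exact le_trans (Ideal.mul_mono h12 le_rfl) (hpow k)
  have hM : ∀ m : ℕ, (J1 + J2 + J3) ^ (m + 1) = J1 * J3 ^ m + (J2 + J3) ^ (m + 1) := by
    intro m
    induction m with
    | zero => simp [Ideal.add_eq_sup, sup_assoc]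
    | succ m ih =>
      have expand : (J1 + J2 + J3) ^ (m + 2)
          = (J1 + (J2 + J3)) * (J1 * J3 ^ m + (J2 + J3) ^ (m + 1)) := by
        rw [show m + 2 = (m + 1) + 1 by ring, pow_succ, ih]; ring
      apply le_antisymm
      · rw [expand]
        have : (J1 + (J2 + J3)) * (J1 * J3 ^ m + (J2 + J3) ^ (m + 1))
            = (J1 * J1) * J3 ^ m + (J1 * (J2 + J3) ^ (m + 1)
              + ((J2 + J3) * (J1 * J3 ^ m) + (J2 + J3) ^ (m + 2))) := by ring
        rw [this]
        rw [Ideal.add_eq_sup, Ideal.add_eq_sup, Ideal.add_eq_sup]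
        refine sup_le ?_ (sup_le ?_ (sup_le ?_ le_sup_right))
        · exact le_trans (le_trans (Ideal.mul_mono h11 le_rfl) (hpow m)) le_sup_right
        · exact le_trans (hL (m + 1)) le_rfl
        · rw [← Ideal.add_eq_sup]
          calc (J2 + J3) * (J1 * J3 ^ m) = J1 * J2 * J3 ^ m + J1 * J3 ^ (m + 1) := by ring
            _ ≤ (J2 + J3) ^ (m + 2) + J1 * J3 ^ (m + 1) := by
                rw [Ideal.add_eq_sup, Ideal.add_eq_sup]
                exact sup_le (le_trans (le_trans (Ideal.mul_mono h12 le_rfl) (hpow m))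
                  le_sup_left) le_sup_right
            _ ≤ J1 * J3 ^ (m + 1) + (J2 + J3) ^ (m + 2) := by
                rw [Ideal.add_eq_sup, Ideal.add_eq_sup]
                exact sup_le le_sup_right le_sup_left
          -- result: J1*J3^(m+1)+(J2+J3)^(m+2) ≤ goal? need adapt
      · rw [expand, Ideal.add_eq_sup]
        refine sup_le ?_ ?_
        · calc J1 * J3 ^ (m + 1) = J3 * (J1 * J3 ^ m) := by ring
            _ ≤ (J1 + (J2 + J3)) * (J1 * J3 ^ m + (J2 + J3) ^ (m + 1)) :=
              Ideal.mul_mono (le_trans le_sup_right le_sup_right) le_sup_left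
        · calc (J2 + J3) ^ (m + 2) = (J2 + J3) * (J2 + J3) ^ (m + 1) := by ring
            _ ≤ (J1 + (J2 + J3)) * (J1 * J3 ^ m + (J2 + J3) ^ (m + 1)) :=
              Ideal.mul_mono le_sup_right le_sup_right
  intro n hn
  obtain ⟨m, rfl⟩ : ∃ m, n = m + 2 := ⟨n - 2, by omega⟩
  simp only [Nat.add_sub_cancel, show m + 2 - 1 = m + 1 by omega]
  rw [show m + 2 = (m + 1) + 1 by ring, pow_succ, hM m, mul_comm]
end

section
/- In the polynomial ring k[a1,...,ar] (r ≥ 2, indices mod r), the ideal B0 = (a_j^6, a_j^5 * a_{j+1} : j ∈ [r]) and Bc = (c) * (a1^4 * ... * ar^4) in k[a1,...,ar,c] satisfy Bc^2 ⊆ B0^2 and Bc * B0 ⊆ B0^2. -/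
open MvPolynomial

/-- The variables `a_1, …, a_r` (as `Fin (r+2)`, so that `r ≥ 2`) together with `c`. -/
abbrev AVar (r : ℕ) := Fin (r + 2) ⊕ Unit

noncomputable def aa {k : Type*} [Field k] (r : ℕ) (j : Fin (r + 2)) :
    MvPolynomial (AVar r) k := X (Sum.inl j)

noncomputable def cc {k : Type*} [Field k] (r : ℕ) :
    MvPolynomial (AVar r) k := X (Sum.inr ())

/-- `B0 = (a_j^6, a_j^5 a_{j+1} : j)` with cyclic indices. -/
noncomputable def B0 {k : Type*} [Field k] (r : ℕ) : Ideal (MvPolynomial (AVar r) k) :=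
  Ideal.span
    ((Set.range fun j : Fin (r + 2) => aa r j ^ 6) ∪
      Set.range fun j : Fin (r + 2) => aa r j ^ 5 * aa r (j + 1))

/-- `Bc = (c · a_1^4 ⋯ a_r^4)`. -/
noncomputable def Bc {k : Type*} [Field k] (r : ℕ) : Ideal (MvPolynomial (AVar r) k) :=
  Ideal.span {cc r * ∏ j : Fin (r + 2), aa r j ^ 4}

/-! Every generator of `B0 · B0` is a product of two factors `a_i^6` or `a_i^5 a_{i+1}`, and
`a_1^4 ⋯ a_r^4` times any generator of `B0` (or times itself) is divisible by such a product:
`a_i^6 · a_{i+1}^6`, `(a_i^5 a_{i+1})^2`, or `a_i^6 · a_{i+1}^5 a_{i+2}`. Only exponents at two or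
three indices are compared, so the `a_j` may be arbitrary elements of a commutative semiring. -/

section Divisibility

variable {ι M : Type*} [Fintype ι] [DecidableEq ι] [CommMonoid M] (f : ι → M)

lemma mul_dvd_prod_of_ne {i j : ι} (hij : i ≠ j) : f i * f j ∣ ∏ t, f t := by
  simpa [Finset.prod_pair hij] using
    Finset.prod_dvd_prod_of_subset {i, j} Finset.univ f (Finset.subset_univ _)

lemma mul_mul_dvd_prod_of_ne {i j l : ι} (hij : i ≠ j) (hil : i ≠ l) (hjl : j ≠ l) :
    f i * f j * f l ∣ ∏ t, f t := by
  have := Finset.prod_dvd_prod_of_subset {i, j, l} Finset.univ f (Finset.subset_univ _)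
  rwa [Finset.prod_insert (by simp [hij, hil]), Finset.prod_pair hjl, ← mul_assoc] at this

end Divisibility

lemma Fin.ne_add_one {n : ℕ} (i : Fin (n + 2)) : i ≠ i + 1 := by
  simp

lemma Ideal.mul_mem_sq {R : Type*} [CommSemiring R] {I : Ideal R} {x y : R} (hx : x ∈ I)
    (hy : y ∈ I) : x * y ∈ I ^ 2 :=
  pow_two I ▸ Ideal.mul_mem_mul hx hy

section CyclicIdeal

variable {R : Type*} [CommSemiring R] {n : ℕ} (a : Fin (n + 2) → R)

def cyclicIdeal : Ideal R :=
  Ideal.span ((Set.range fun j => a j ^ 6) ∪ Set.range fun j => a j ^ 5 * a (j + 1))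

lemma pow_six_mem_cyclicIdeal (j : Fin (n + 2)) : a j ^ 6 ∈ cyclicIdeal a :=
  Ideal.subset_span (Set.mem_union_left _ ⟨j, rfl⟩)

lemma pow_five_mul_succ_mem_cyclicIdeal (j : Fin (n + 2)) :
    a j ^ 5 * a (j + 1) ∈ cyclicIdeal a :=
  Ideal.subset_span (Set.mem_union_right _ ⟨j, rfl⟩)

lemma prod_pow_four_sq_mem_cyclicIdeal_sq :
    (∏ j, a j ^ 4) ^ 2 ∈ cyclicIdeal a ^ 2 := by
  obtain ⟨q, hq⟩ := mul_dvd_prod_of_ne (fun j => a j ^ 4) (Fin.ne_add_one 0)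
  refine (cyclicIdeal a ^ 2).mem_of_dvd ⟨a 0 ^ 2 * a 1 ^ 2 * q ^ 2, ?_⟩
    (Ideal.mul_mem_sq (pow_six_mem_cyclicIdeal a 0) (pow_six_mem_cyclicIdeal a 1))
  rw [hq, zero_add]
  ring

lemma prod_pow_four_mul_pow_six_mem_cyclicIdeal_sq (i : Fin (n + 2)) :
    (∏ j, a j ^ 4) * a i ^ 6 ∈ cyclicIdeal a ^ 2 := by
  obtain ⟨q, hq⟩ := mul_dvd_prod_of_ne (fun j => a j ^ 4) (Fin.ne_add_one i)
  refine (cyclicIdeal a ^ 2).mem_of_dvd ⟨a (i + 1) ^ 2 * q, ?_⟩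
    (Ideal.mul_mem_sq (pow_five_mul_succ_mem_cyclicIdeal a i)
      (pow_five_mul_succ_mem_cyclicIdeal a i))
  rw [hq]
  ring

lemma prod_pow_four_mul_pow_five_mul_succ_mem_cyclicIdeal_sq (i : Fin (n + 2)) :
    (∏ j, a j ^ 4) * (a i ^ 5 * a (i + 1)) ∈ cyclicIdeal a ^ 2 := by
  refine (cyclicIdeal a ^ 2).mem_of_dvd ?_
    (Ideal.mul_mem_sq (pow_six_mem_cyclicIdeal a i) (pow_five_mul_succ_mem_cyclicIdeal a (i + 1)))
  -- `i + 2 = i` happens exactly when there are only two variables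
  by_cases h : i + 1 + 1 = i
  · obtain ⟨q, hq⟩ := mul_dvd_prod_of_ne (fun j => a j ^ 4) (Fin.ne_add_one i)
    exact ⟨a i ^ 2 * q, by rw [hq, h]; ring⟩
  · obtain ⟨q, hq⟩ := mul_mul_dvd_prod_of_ne (fun j => a j ^ 4) (Fin.ne_add_one i) (Ne.symm h)
      (Fin.ne_add_one (i + 1))
    exact ⟨a i ^ 3 * a (i + 1 + 1) ^ 3 * q, by rw [hq]; ring⟩

lemma span_prod_pow_four_mul_cyclicIdeal_le :
    Ideal.span {∏ j, a j ^ 4} * cyclicIdeal a ≤ cyclicIdeal a ^ 2 := by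
  rw [cyclicIdeal, Ideal.span_mul_span', Ideal.span_le, Set.singleton_mul, Set.image_subset_iff,
    Set.union_subset_iff, Set.range_subset_iff, Set.range_subset_iff]
  exact ⟨prod_pow_four_mul_pow_six_mem_cyclicIdeal_sq a,
    prod_pow_four_mul_pow_five_mul_succ_mem_cyclicIdeal_sq a⟩

end CyclicIdeal

theorem stmt2 {k : Type*} [Field k] (r : ℕ) :
    (Bc (k := k) r) ^ 2 ≤ (B0 (k := k) r) ^ 2 ∧
      Bc (k := k) r * B0 (k := k) r ≤ (B0 (k := k) r) ^ 2 := by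
  have hB0 : B0 (k := k) r = cyclicIdeal (aa r) := rfl
  have hBc : Bc (k := k) r ≤ Ideal.span {∏ j, aa r j ^ 4} :=
    Ideal.span_singleton_le_span_singleton.mpr (dvd_mul_left _ _)
  rw [hB0]
  refine ⟨(Ideal.pow_right_mono hBc 2).trans ?_,
    (Ideal.mul_mono_left hBc).trans (span_prod_pow_four_mul_cyclicIdeal_le _)⟩
  rw [Ideal.span_singleton_pow, Ideal.span_singleton_le_iff_mem]
  exact prod_pow_four_sq_mem_cyclicIdeal_sq _
end

section
/- For all positive integers m and n, ∑_{i=0}^m 2^i * C(m,i) * δ[n-1 ≤ min(2q+i, 2m-i)] = ∑_{ℓ=0}^m ∑_{t=b(ℓ)}^m C(m,ℓ) * C(ℓ, ℓ+t-m) + ε, where q = ⌊(n-1)/2⌋, b(ℓ) = max(n-1-ℓ, m-ℓ), δ[P] is 1 if P holds and 0 otherwise, and ε = -1 if n ≤ 2m and n is even, and ε = 0 otherwise. -/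
/-!
Substituting `j = ℓ + t - m` and exchanging the order of summation, the double sum becomes
`∑ j, 2 ^ (m - j) * C(m, j)` over `n - 1 - m ≤ j ≤ m`, by the subset-of-a-subset identity
`C(m, ℓ) * C(ℓ, j) = C(m, j) * C(m - j, ℓ - j)`. With `i = m - j` this is the left-hand sum
subject only to `n - 1 ≤ 2 * m - i`; the other constraint `n - 1 ≤ 2 * q + i` fails only for
`i = 0` with `n` even, and that missing term `1` is the correction `ε`.
-/

open Finset

namespace Nat

theorem sum_range_choose_mul_choose (m j : ℕ) :
    ∑ ℓ ∈ range (m + 1), m.choose ℓ * ℓ.choose j = 2 ^ (m - j) * m.choose j := by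
  rcases lt_or_ge m j with hmj | hjm
  · rw [choose_eq_zero_of_lt hmj, mul_zero]
    exact sum_eq_zero fun ℓ hℓ ↦ by
      rw [choose_eq_zero_of_lt (n := ℓ) (by simp at hℓ; omega), mul_zero]
  have hbelow : ∑ ℓ ∈ range j, m.choose ℓ * ℓ.choose j = 0 :=
    sum_eq_zero fun ℓ hℓ ↦ by rw [choose_eq_zero_of_lt (mem_range.1 hℓ), mul_zero]
  rw [← sum_range_add_sum_Ico _ (by omega : j ≤ m + 1), hbelow, zero_add,
    sum_Ico_eq_sum_range]
  simp_rw [choose_mul (le_add_right j _), Nat.add_sub_cancel_left, ← mul_sum,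
    show m + 1 - j = m - j + 1 by omega, sum_range_choose, mul_comm]

theorem sum_Icc_choose_add_sub {ℓ m : ℕ} (a : ℕ) (hℓ : ℓ ≤ m) :
    ∑ t ∈ Icc (max (a - ℓ) (m - ℓ)) m, ℓ.choose (ℓ + t - m)
      = ∑ j ∈ Icc (a - m) m, ℓ.choose j := by
  have hshift : ∑ t ∈ Icc (max (a - ℓ) (m - ℓ)) m, ℓ.choose (ℓ + t - m)
      = ∑ j ∈ Icc (a - m) ℓ, ℓ.choose j := by
    apply sum_nbij' (fun t ↦ ℓ + t - m) (fun j ↦ m - ℓ + j) <;>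
      intros <;> simp_all only [mem_Icc, max_le_iff] <;> omega
  rw [hshift]
  refine sum_subset (Icc_subset_Icc_right hℓ) fun j hj hjℓ ↦ ?_
  simp only [mem_Icc] at hj hjℓ
  exact choose_eq_zero_of_lt (by omega)

theorem sum_Icc_pow_mul_choose_eq_sum_range (a m : ℕ) :
    ∑ j ∈ Icc (a - m) m, 2 ^ (m - j) * m.choose j
      = ∑ i ∈ range (m + 1), if a ≤ 2 * m - i then 2 ^ i * m.choose i else 0 := by
  rw [← sum_filter]
  refine sum_nbij' (fun j ↦ m - j) (fun i ↦ m - i) ?_ ?_ ?_ ?_ fun j hj ↦ ?_ <;>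
    try (intros; simp_all only [mem_Icc, mem_filter, mem_range]; omega)
  rw [choose_symm (mem_Icc.1 hj).2]

theorem sum_range_sum_Icc_choose_mul_choose (a m : ℕ) :
    ∑ ℓ ∈ range (m + 1), ∑ t ∈ Icc (max (a - ℓ) (m - ℓ)) m, m.choose ℓ * ℓ.choose (ℓ + t - m)
      = ∑ i ∈ range (m + 1), if a ≤ 2 * m - i then 2 ^ i * m.choose i else 0 := by
  calc _ = ∑ ℓ ∈ range (m + 1), ∑ j ∈ Icc (a - m) m, m.choose ℓ * ℓ.choose j :=
        sum_congr rfl fun ℓ hℓ ↦ by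
          rw [← mul_sum, ← mul_sum, sum_Icc_choose_add_sub a (by simp at hℓ; omega)]
    _ = ∑ j ∈ Icc (a - m) m, 2 ^ (m - j) * m.choose j := by
        rw [sum_comm]
        simp_rw [sum_range_choose_mul_choose]
    _ = _ := sum_Icc_pow_mul_choose_eq_sum_range a m

end Nat

theorem stmt6_general (m n : ℕ) (hn : 1 ≤ n) :
    (∑ i ∈ Finset.range (m + 1),
        (2 ^ i * m.choose i : ℤ) *
          (if n - 1 ≤ min (2 * ((n - 1) / 2) + i) (2 * m - i) then 1 else 0))
      = (∑ ℓ ∈ Finset.range (m + 1), ∑ t ∈ Finset.Icc (max (n - 1 - ℓ) (m - ℓ)) m,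
          (m.choose ℓ * ℓ.choose (ℓ + t - m) : ℤ))
        + (if n ≤ 2 * m ∧ Even n then -1 else 0) := by
  have hR := congrArg (Nat.cast : ℕ → ℤ) (Nat.sum_range_sum_Icc_choose_mul_choose (n - 1) m)
  push_cast [Nat.cast_ite] at hR
  rw [hR, sum_range_succ', sum_range_succ']
  have hpos : ∀ i ∈ range m, (2 ^ (i + 1) * m.choose (i + 1) : ℤ) *
      (if n - 1 ≤ min (2 * ((n - 1) / 2) + (i + 1)) (2 * m - (i + 1)) then 1 else 0)
        = if n - 1 ≤ 2 * m - (i + 1) then (2 : ℤ) ^ (i + 1) * m.choose (i + 1) else 0 := by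
    intro i _
    have hfloor : n - 1 ≤ 2 * ((n - 1) / 2) + (i + 1) := by omega
    simp only [le_min_iff, hfloor, true_and, mul_ite, mul_one, mul_zero]
  rw [sum_congr rfl hpos]
  simp only [Nat.even_iff, Nat.choose_zero_right]
  split_ifs <;> omega

theorem stmt6 (m n : ℕ) (hm : 1 ≤ m) (hn : 1 ≤ n) :
    (∑ i ∈ Finset.range (m + 1),
        (2 ^ i * m.choose i : ℤ) *
          (if n - 1 ≤ min (2 * ((n - 1) / 2) + i) (2 * m - i) then 1 else 0))
      = (∑ ℓ ∈ Finset.range (m + 1), ∑ t ∈ Finset.Icc (max (n - 1 - ℓ) (m - ℓ)) m,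
          (m.choose ℓ * ℓ.choose (ℓ + t - m) : ℤ))
        + (if n ≤ 2 * m ∧ Even n then -1 else 0) :=
  stmt6_general m n hn
end

section
/- For m ≥ 1 and n in the range m+1 ≤ n ≤ 2m, the difference φ2(n) - φ2(n+1) = ∑_{ℓ=n-1-m}^{m} C(m,ℓ) * C(ℓ, n-1-m) is at least 2, where φ2(n) = ∑_{ℓ=0}^m ∑_{t=max(n-1-ℓ, m-ℓ)}^m C(m,ℓ) C(ℓ, ℓ+t-m). -/
/-!
For `n ≥ m + 1` the lower limit `max (n - 1 - ℓ) (m - ℓ)` is `n - 1 - ℓ`, so passing from `n` to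
`n + 1` removes from the `ℓ`-th inner sum exactly its term `t = n - 1 - ℓ`, namely
`C(m, ℓ) C(ℓ, n - 1 - m)`. In the resulting sum the terms `ℓ = n - 1 - m` and `ℓ = m` both equal
`C(m, n - 1 - m) ≥ 1`, and they are distinct because `n ≤ 2m`.
-/

/-- `φ₂(n) = ∑_{ℓ=0}^m ∑_{t=max(n-1-ℓ, m-ℓ)}^m C(m,ℓ) C(ℓ, ℓ+t-m)`. -/
def phi2 (m n : ℕ) : ℕ :=
  ∑ ℓ ∈ Finset.range (m + 1), ∑ t ∈ Finset.Icc (max (n - 1 - ℓ) (m - ℓ)) m,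
    m.choose ℓ * ℓ.choose (ℓ + t - m)

open Finset

lemma sum_Icc_choose_add_sub_eq (ℓ m a : ℕ) :
    ∑ t ∈ Icc a m, ℓ.choose (ℓ + t - m) =
      ∑ t ∈ Icc (a + 1) m, ℓ.choose (ℓ + t - m) + ℓ.choose (ℓ + a - m) := by
  rw [Icc_add_one_left_eq_Ioc]
  by_cases ha : a ≤ m
  · rw [← add_sum_Ioc_eq_sum_Icc ha, add_comm]
  · rw [Icc_eq_empty ha, Ioc_eq_empty (by omega), Nat.choose_eq_zero_of_lt (by omega), add_zero]

lemma phi2_eq_phi2_succ_add {m n : ℕ} (hn : m + 1 ≤ n) :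
    phi2 m n = phi2 m (n + 1) + ∑ ℓ ∈ range (m + 1), m.choose ℓ * ℓ.choose (n - 1 - m) := by
  simp only [phi2, ← mul_sum, ← sum_add_distrib, ← mul_add]
  refine sum_congr rfl fun ℓ hℓ => ?_
  have hℓm : ℓ ≤ m := Nat.lt_succ_iff.mp (mem_range.mp hℓ)
  rw [max_eq_left (by omega), max_eq_left (by omega), sum_Icc_choose_add_sub_eq,
    show n - 1 - ℓ + 1 = n + 1 - 1 - ℓ by omega, show ℓ + (n - 1 - ℓ) - m = n - 1 - m by omega]

lemma sum_Icc_choose_mul_choose_eq_sum_range (m k : ℕ) :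
    ∑ ℓ ∈ Icc k m, m.choose ℓ * ℓ.choose k = ∑ ℓ ∈ range (m + 1), m.choose ℓ * ℓ.choose k := by
  refine sum_subset (fun ℓ hℓ => ?_) fun ℓ _ hℓ => ?_
  · simp only [mem_Icc, mem_range] at hℓ ⊢; omega
  · have : ℓ < k := by simp only [mem_Icc, mem_range] at *; omega
    rw [Nat.choose_eq_zero_of_lt this, mul_zero]

lemma two_le_sum_Icc_choose_mul_choose {m k : ℕ} (hk : k < m) :
    2 ≤ ∑ ℓ ∈ Icc k m, m.choose ℓ * ℓ.choose k :=
  calc 2 ≤ m.choose k * k.choose k + m.choose m * m.choose k := by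
        have := Nat.choose_pos hk.le
        simp only [Nat.choose_self]; omega
    _ = ∑ ℓ ∈ {k, m}, m.choose ℓ * ℓ.choose k :=
        (sum_pair (f := fun ℓ => m.choose ℓ * ℓ.choose k) hk.ne).symm
    _ ≤ ∑ ℓ ∈ Icc k m, m.choose ℓ * ℓ.choose k :=
        sum_le_sum_of_subset (by simp [insert_subset_iff, hk.le])

theorem stmt7_general (m n : ℕ) (hn1 : m + 1 ≤ n) (hn2 : n ≤ 2 * m) :
    (phi2 m n : ℤ) - phi2 m (n + 1)
        = ∑ ℓ ∈ Finset.Icc (n - 1 - m) m, (m.choose ℓ * ℓ.choose (n - 1 - m) : ℤ) ∧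
      2 ≤ (phi2 m n : ℤ) - phi2 m (n + 1) := by
  have hstep := phi2_eq_phi2_succ_add hn1
  rw [← sum_Icc_choose_mul_choose_eq_sum_range] at hstep
  have hdiff : (phi2 m n : ℤ) - phi2 m (n + 1)
      = ∑ ℓ ∈ Icc (n - 1 - m) m, (m.choose ℓ * ℓ.choose (n - 1 - m) : ℤ) := by
    rw [hstep]; push_cast; ring
  refine ⟨hdiff, hdiff ▸ ?_⟩
  exact_mod_cast two_le_sum_Icc_choose_mul_choose (by omega)

theorem stmt7 (m n : ℕ) (hm : 1 ≤ m) (hn1 : m + 1 ≤ n) (hn2 : n ≤ 2 * m) :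
    (phi2 m n : ℤ) - phi2 m (n + 1)
        = ∑ ℓ ∈ Finset.Icc (n - 1 - m) m, (m.choose ℓ * ℓ.choose (n - 1 - m) : ℤ) ∧
      2 ≤ (phi2 m n : ℤ) - phi2 m (n + 1) :=
  stmt7_general m n hn1 hn2
end

section
/- Let R = k[a1, a2, c, x_{i,j} : i ∈ [m], j ∈ {1,2}] and B = BHH(m,2,1) = (a1^6, a2^6, a1^5 a2, a2^5 a1, c a1^4 a2^4) + (a1^4 x_{i,1} x_{i,2}^2, a2^4 x_{i,2} x_{i,1}^2 : i ∈ [m]). Then for each i and j ∈ {1,2}, the element x_{i,j} * a1^4 * a2^4 * h_{i,j} lies in B^2, where h_{i,j} = a_j^4 x_{i,j} x_{i,j+1}^2 (indices mod 2). -/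
open MvPolynomial

/-- Variables of the ring `k[a_1, …, a_r, c, x_{i,j} : i ∈ [m], j ∈ [r]]`. -/
abbrev Var (m r : ℕ) := Fin r ⊕ Unit ⊕ (Fin m × Fin r)

/-- The variable `a_j`. -/
noncomputable def va {k : Type*} [Field k] (m r : ℕ) (j : Fin r) :
    MvPolynomial (Var m r) k := X (Sum.inl j)

/-- The variable `c`. -/
noncomputable def vc {k : Type*} [Field k] (m r : ℕ) :
    MvPolynomial (Var m r) k := X (Sum.inr (Sum.inl ()))

/-- The variable `x_{i,j}`. -/
noncomputable def vx {k : Type*} [Field k] (m r : ℕ) (i : Fin m) (j : Fin r) :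
    MvPolynomial (Var m r) k := X (Sum.inr (Sum.inr (i, j)))

/-- `h_{i,j} = a_j^4 x_{i,j} x_{i,j+1}^2` (second index cyclic mod `r`). -/
noncomputable def hgen {k : Type*} [Field k] (m r : ℕ) [NeZero r] (i : Fin m) (j : Fin r) :
    MvPolynomial (Var m r) k :=
  va m r j ^ 4 * vx m r i j * vx m r i (j + 1) ^ 2

/-- The ideal `BHH(m,r,1) = (a_j^6, a_j^5 a_{j+1} : j) + (c a_1^4 ⋯ a_r^4)
  + (a_j^4 x_{i,j} x_{i,j+1}^2 : i, j)`, indices cyclic mod `r`. -/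
noncomputable def BHH {k : Type*} [Field k] (m r : ℕ) [NeZero r] :
    Ideal (MvPolynomial (Var m r) k) :=
  Ideal.span
    ((Set.range fun j : Fin r => va m r j ^ 6) ∪
      (Set.range fun j : Fin r => va m r j ^ 5 * va m r (j + 1)) ∪
      {vc m r * ∏ j : Fin r, va m r j ^ 4} ∪
      (Set.range fun p : Fin m × Fin r => hgen m r p.1 p.2))

theorem stmt10 {k : Type*} [Field k] (m : ℕ) (hm : 1 ≤ m) (i : Fin m) (j : Fin 2) :
    vx (k := k) m 2 i j * va m 2 0 ^ 4 * va m 2 1 ^ 4 * hgen m 2 i j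
      ∈ (BHH (k := k) m 2) ^ 2 := by
  have h1 : va (k := k) m 2 j ^ 6 ∈ BHH (k := k) m 2 :=
    Ideal.subset_span (by left; left; left; exact ⟨j, rfl⟩)
  have h2 : hgen (k := k) m 2 i (j + 1) ∈ BHH (k := k) m 2 :=
    Ideal.subset_span (by right; exact ⟨(i, j + 1), rfl⟩)
  have hmul := Ideal.mul_mem_mul h1 h2
  rw [sq]
  have key : vx (k := k) m 2 i j * va m 2 0 ^ 4 * va m 2 1 ^ 4 * hgen m 2 i j
      = (va m 2 j ^ 2 * vx m 2 i (j + 1)) * (va m 2 j ^ 6 * hgen m 2 i (j + 1)) := by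
    fin_cases j <;>
      simp only [hgen, Fin.mk_zero, Fin.mk_one, show (0:Fin 2)+1 = 1 from rfl,
        show (1:Fin 2)+1 = 0 from rfl] <;> ring
  rw [key]
  exact Ideal.mul_mem_left _ _ hmul
end

section
/- With B = BHH(m,2,1) as above, a1^4 * a2^4 * h_{i,j}^2 ∈ B^3 for all i ∈ [m] and j ∈ {1,2}. -/
open MvPolynomial

theorem stmt11 {k : Type*} [Field k] (m : ℕ) (hm : 1 ≤ m) (i : Fin m) (j : Fin 2) :
    va (k := k) m 2 0 ^ 4 * va m 2 1 ^ 4 * hgen m 2 i j ^ 2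
      ∈ (BHH (k := k) m 2) ^ 3 := by
  have hB : ∀ jj : Fin 2, va (k := k) m 2 jj ^ 6 ∈ BHH (k := k) m 2 := fun jj =>
    Ideal.subset_span (by left; left; left; exact ⟨jj, rfl⟩)
  have hH : ∀ jj : Fin 2, hgen (k := k) m 2 i jj ∈ BHH (k := k) m 2 := fun jj =>
    Ideal.subset_span (by right; exact ⟨(i, jj), rfl⟩)
  have mem3 : ∀ jj : Fin 2,
      va (k := k) m 2 jj ^ 6 * va m 2 jj ^ 6 * hgen m 2 i (jj + 1)
        ∈ (BHH (k := k) m 2) ^ 3 := by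
    intro jj
    have h3 : (BHH (k := k) m 2) ^ 3
        = BHH (k := k) m 2 * BHH (k := k) m 2 * BHH (k := k) m 2 := by ring
    rw [h3]
    exact Ideal.mul_mem_mul (Ideal.mul_mem_mul (hB jj) (hB jj)) (hH (jj + 1))
  fin_cases j
  · have h := Ideal.mul_mem_left _ (vx (k := k) m 2 i 1 ^ 3) (mem3 0)
    convert h using 1
    show _ = vx (k := k) m 2 i 1 ^ 3 *
      (va m 2 0 ^ 6 * va m 2 0 ^ 6 * hgen m 2 i 1)
    simp only [hgen, Fin.mk_zero, Fin.mk_one, show ((0:Fin 2)+1)=1 from rfl, show ((1:Fin 2)+1)=0 from rfl, show ((1:Fin 2)+0)=1 from rfl]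
    ring
  · have h := Ideal.mul_mem_left _ (vx (k := k) m 2 i 0 ^ 3) (mem3 1)
    convert h using 1
    show _ = vx (k := k) m 2 i 0 ^ 3 *
      (va m 2 1 ^ 6 * va m 2 1 ^ 6 * hgen m 2 i 0)
    simp only [hgen, Fin.mk_zero, Fin.mk_one, show ((0:Fin 2)+1)=1 from rfl, show ((1:Fin 2)+1)=0 from rfl, show ((1:Fin 2)+0)=1 from rfl]
    ring
end

section
/- Let r ≥ 2 and B = BHH(m,r,1) in R = k[a_j, c, x_{i,j}]. Then for all i ∈ [m], j ∈ [r] (indices mod r): x_{i,j+2}^2 * a_j^4 * a_{j+1}^4 * h_{i,j} ∈ B^2, where h_{i,j} = a_j^4 x_{i,j} x_{i,j+1}^2. -/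
open MvPolynomial

section

variable {k : Type*} [Field k] {m r : ℕ} [NeZero r]

theorem va_pow_six_mem_BHH (j : Fin r) : va (k := k) m r j ^ 6 ∈ BHH (k := k) m r :=
  Ideal.subset_span (Or.inl (Or.inl (Or.inl ⟨j, rfl⟩)))

theorem hgen_mem_BHH (i : Fin m) (j : Fin r) : hgen (k := k) m r i j ∈ BHH (k := k) m r :=
  Ideal.subset_span (Or.inr ⟨(i, j), rfl⟩)

theorem vx_sq_mul_va_pow_mul_hgen_eq (i : Fin m) (j : Fin r) :
    vx (k := k) m r i (j + 2) ^ 2 * va m r j ^ 4 * va m r (j + 1) ^ 4 * hgen m r i j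
      = va m r j ^ 2 * vx m r i j * vx m r i (j + 1) * va m r j ^ 6 * hgen m r i (j + 1) := by
  rw [hgen, hgen, show j + 1 + 1 = j + 2 by grind]
  ring

end

theorem stmt12_general {k : Type*} [Field k] (m r : ℕ) (i : Fin m) (j : Fin (r + 2)) :
    vx (k := k) m (r + 2) i (j + 2) ^ 2 * va m (r + 2) j ^ 4 * va m (r + 2) (j + 1) ^ 4 *
        hgen m (r + 2) i j
      ∈ (BHH (k := k) m (r + 2)) ^ 2 := by
  rw [vx_sq_mul_va_pow_mul_hgen_eq, pow_two]
  exact Ideal.mul_mem_mul (Ideal.mul_mem_left _ _ (va_pow_six_mem_BHH j)) (hgen_mem_BHH i (j + 1))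

theorem stmt12 {k : Type*} [Field k] (m r : ℕ) (hm : 1 ≤ m) (i : Fin m) (j : Fin (r + 2)) :
    vx (k := k) m (r + 2) i (j + 2) ^ 2 * va m (r + 2) j ^ 4 * va m (r + 2) (j + 1) ^ 4 *
        hgen m (r + 2) i j
      ∈ (BHH (k := k) m (r + 2)) ^ 2 :=
  stmt12_general m r i j
end

section
/- With B = BHH(m,r,1) (r ≥ 2), for all i ∈ [m], j ∈ [r]: a_{j-1}^4 * a_j^4 * x_{i,j-1} * x_{i,j} * h_{i,j} ∈ B^2. -/
open MvPolynomial

theorem stmt13 {k : Type*} [Field k] (m r : ℕ) (hm : 1 ≤ m) (i : Fin m) (j : Fin (r + 2)) :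
    va (k := k) m (r + 2) (j - 1) ^ 4 * va m (r + 2) j ^ 4 * vx m (r + 2) i (j - 1) *
        vx m (r + 2) i j * hgen m (r + 2) i j
      ∈ (BHH (k := k) m (r + 2)) ^ 2 := by
  have h1 : va (k := k) m (r + 2) j ^ 6 ∈ BHH (k := k) m (r + 2) := by
    apply Ideal.subset_span
    exact Or.inl (Or.inl (Or.inl ⟨j, rfl⟩))
  have h2 : hgen (k := k) m (r + 2) i (j - 1) ∈ BHH (k := k) m (r + 2) := by
    apply Ideal.subset_span
    exact Or.inr ⟨(i, j - 1), rfl⟩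
  have := Ideal.mul_mem_left _
    (va (k := k) m (r + 2) j ^ 2 * vx m (r + 2) i (j + 1) ^ 2)
    (Ideal.mul_mem_mul h1 h2)
  rw [← sq] at this
  convert this using 1
  simp only [hgen, sub_add_cancel]
  ring
end

section
/- With B = BHH(m,r,1) (r ≥ 2), for all i, j: x_{i,j-1} * a_{j-1}^4 * a_j^4 * h_{i,j}^2 ∈ B^3. -/
open MvPolynomial

theorem stmt14 {k : Type*} [Field k] (m r : ℕ) (hm : 1 ≤ m) (i : Fin m) (j : Fin (r + 2)) :
    vx (k := k) m (r + 2) i (j - 1) * va m (r + 2) (j - 1) ^ 4 * va m (r + 2) j ^ 4 *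
        hgen m (r + 2) i j ^ 2
      ∈ (BHH (k := k) m (r + 2)) ^ 3 := by
  have hg : hgen (k := k) m (r + 2) i (j - 1) ∈ BHH (k := k) m (r + 2) := by
    apply Ideal.subset_span
    exact Or.inr ⟨(i, j - 1), rfl⟩
  have ha : va (k := k) m (r + 2) j ^ 6 ∈ BHH (k := k) m (r + 2) := by
    apply Ideal.subset_span
    exact Or.inl (Or.inl (Or.inl ⟨j, rfl⟩))
  have key : vx (k := k) m (r + 2) i (j - 1) * va m (r + 2) (j - 1) ^ 4 * va m (r + 2) j ^ 4 *
        hgen m (r + 2) i j ^ 2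
      = vx m (r + 2) i (j + 1) ^ 4 *
        (hgen m (r + 2) i (j - 1) * (va m (r + 2) j ^ 6 * va m (r + 2) j ^ 6)) := by
    unfold hgen
    rw [sub_add_cancel]
    ring
  rw [key, show (3 : ℕ) = 1 + (1 + 1) by rfl, pow_add, pow_add, pow_one]
  exact Ideal.mul_mem_left _ _
    (Ideal.mul_mem_mul hg (Ideal.mul_mem_mul ha ha))
end

section
/- With B = BHH(m,r,1) (r ≥ 2), for all i, j: a_{j-2}^4 * a_{j-1}^4 * a_j^4 * h_{i,j-2} * h_{i,j}^2 ∈ B^4. -/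
open MvPolynomial

/-!
Comparing exponents, the monomial is divisible by `a_{j-2}^6 · a_j^6 · a_j^6 · h_{i,j-1}`,
a product of four generators of `BHH(m,r,1)`.
-/

section

variable {k : Type*} [Field k] {m r : ℕ} [NeZero r]

theorem va_mul_hgen_sub_two_mul_hgen_sq_eq (i : Fin m) (j : Fin r) :
    va (k := k) m r (j - 2) ^ 4 * va m r (j - 1) ^ 4 * va m r j ^ 4 *
        hgen m r i (j - 2) * hgen m r i j ^ 2
      = (va m r (j - 2) ^ 2 * vx m r i (j - 2) * vx m r i (j - 1) * vx m r i (j + 1) ^ 4) *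
        (va m r (j - 2) ^ 6 * (va m r j ^ 6) ^ 2 * hgen m r i (j - 1)) := by
  have hj : j - 1 + 1 = j := sub_add_cancel j 1
  have hj2 : j - 2 + 1 = j - 1 := by grind
  rw [hgen, hgen, hgen, hj, hj2]
  ring

end

theorem stmt15_general {k : Type*} [Field k] (m r : ℕ) (i : Fin m) (j : Fin (r + 2)) :
    va (k := k) m (r + 2) (j - 2) ^ 4 * va m (r + 2) (j - 1) ^ 4 * va m (r + 2) j ^ 4 *
        hgen m (r + 2) i (j - 2) * hgen m (r + 2) i j ^ 2
      ∈ (BHH (k := k) m (r + 2)) ^ 4 := by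
  rw [va_mul_hgen_sub_two_mul_hgen_sq_eq]
  refine Ideal.mul_mem_left _ _ ?_
  rw [show BHH (k := k) m (r + 2) ^ 4 = BHH m (r + 2) * BHH m (r + 2) ^ 2 * BHH m (r + 2) by ring]
  exact Ideal.mul_mem_mul
    (Ideal.mul_mem_mul (va_pow_six_mem_BHH _) (Ideal.pow_mem_pow (va_pow_six_mem_BHH _) 2))
    (hgen_mem_BHH i _)

theorem stmt15 {k : Type*} [Field k] (m r : ℕ) (hm : 1 ≤ m) (i : Fin m) (j : Fin (r + 2)) :
    va (k := k) m (r + 2) (j - 2) ^ 4 * va m (r + 2) (j - 1) ^ 4 * va m (r + 2) j ^ 4 *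
        hgen m (r + 2) i (j - 2) * hgen m (r + 2) i j ^ 2
      ∈ (BHH (k := k) m (r + 2)) ^ 4 :=
  stmt15_general m r i j
end

section
/- With B = BHH(m,r,1), B^n : (x_{i,1} x_{i,2} ⋯ x_{i,r})^∞ = ((a_1^4, ..., a_r^4))^n for every i ∈ [m] and n ≥ 1; in particular, the only associated prime of B^n not containing the product x_{i,1}⋯x_{i,r} for some i is (a_1, ..., a_r). -/
/-!
Write `A = (a_1^4, …, a_r^4)`, `Q = (a_1, …, a_r)` and `f = x_{i,1} ⋯ x_{i,r}`. Every generator of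
`B` lies in `A`, and `a_j^4 f^2` is a multiple of `a_j^4 x_{i,j} x_{i,j+1}^2` (here `r ≥ 2`), so
`A^n f^{2n} ⊆ B^n ⊆ A^n`. The ideal `A^n` is extended from `k[a_1, …, a_r]`, where its radical is
the maximal ideal `(a_1, …, a_r)`; modulo `A^n` the whole ring is therefore a polynomial ring over
a ring whose elements are units or nilpotent, and there a polynomial that is not nilpotent is a
nonzerodivisor. Hence `A^n` is `Q`-primary. Since `f ∉ Q`, saturating `B^n` by `f` gives `A^n`.
An associated prime of `B^n` avoiding `f` contains every `a_j`, as `a_j^{4n} f^{2n} ∈ B^n`, and is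
contained in `Q` by primariness.
-/

open MvPolynomial

open scoped nonZeroDivisors

namespace Ideal

variable {R : Type*} [CommRing R] {A B Q : Ideal R}

theorem mem_of_pow_mul_mem (hA : ∀ g ∉ Q, ∀ y, g * y ∈ A → y ∈ A) {g y : R} (hg : g ∉ Q) :
    ∀ t : ℕ, g ^ t * y ∈ A → y ∈ A
  | 0, h => by rwa [pow_zero, one_mul] at h
  | t + 1, h => mem_of_pow_mul_mem hA hg t (hA g hg _ (by rwa [pow_succ', mul_assoc] at h))

theorem mul_mem_of_mul_span_singleton_le {f : R} (hAB : A * span {f} ≤ B) {a : R} (ha : a ∈ A) :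
    a * f ∈ B :=
  hAB (mul_mem_mul ha (mem_span_singleton_self f))

theorem iSup_colon_span_pow_eq {f : R} (hA : ∀ g ∉ Q, ∀ y, g * y ∈ A → y ∈ A) (hf : f ∉ Q)
    (hBA : B ≤ A) {s : ℕ} (hAB : A * span {f ^ s} ≤ B) :
    ⨆ t : ℕ, B.colon (span {f ^ t} : Set R) = A := by
  refine le_antisymm (iSup_le fun t g hg => ?_) fun a ha => ?_
  · rw [mem_colon_span_singleton, mul_comm] at hg
    exact mem_of_pow_mul_mem hA hf t (hBA hg)
  · exact mem_iSup_of_mem s (mem_colon_span_singleton.2 (mul_mem_of_mul_span_singleton_le hAB ha))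

theorem eq_of_mem_associatedPrimes_quotient {f : R} (hA : ∀ g ∉ Q, ∀ y, g * y ∈ A → y ∈ A)
    (hQA : Q ≤ A.radical) (hBA : B ≤ A) {s : ℕ} (hAB : A * span {f ^ s} ≤ B) {P : Ideal R}
    (hP : P ∈ associatedPrimes R (R ⧸ B)) (hfP : f ∉ P) : P = Q := by
  obtain ⟨hPprime, x, rfl⟩ := hP
  obtain ⟨x, rfl⟩ := Quotient.mk_surjective x
  have mem_colon : ∀ g, g ∈ Submodule.colon ⊥ {Quotient.mk B x} ↔ g * x ∈ B := fun g => by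
    rw [Submodule.mem_colon_singleton, Submodule.mem_bot, Algebra.smul_def,
      Quotient.algebraMap_eq, ← map_mul, Quotient.eq_zero_iff_mem]
  have hx : x ∉ A := fun hx => hfP <| hPprime.mem_of_pow_mem s <| le_radical <|
    (mem_colon _).2 (by rw [mul_comm]; exact mul_mem_of_mul_span_singleton_le hAB hx)
  refine le_antisymm (fun g hg => ?_) fun g hg => ?_
  · obtain ⟨t, hg⟩ := hg
    by_contra hgQ
    exact hx (mem_of_pow_mul_mem hA hgQ t (hBA ((mem_colon _).1 hg)))
  · obtain ⟨t, ht⟩ := hQA hg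
    have : g ^ t * f ^ s ∈ (Submodule.colon ⊥ {Quotient.mk B x}).radical :=
      le_radical <| (mem_colon _).2 <| B.mul_mem_right x (mul_mem_of_mul_span_singleton_le hAB ht)
    exact ((hPprime.mem_or_mem this).resolve_right fun h => hfP (hPprime.mem_of_pow_mem s h)) |>
      hPprime.mem_of_pow_mem t

end Ideal

theorem add_mem_nonZeroDivisors_of_isNilpotent {R : Type*} [CommRing R] {u n : R}
    (hu : u ∈ R⁰) (hn : IsNilpotent n) : u + n ∈ R⁰ := by
  rw [mem_nonZeroDivisors_iff_right] at hu ⊢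
  intro x hx
  have hpow : ∀ j : ℕ, x * u ^ j = x * (-n) ^ j := fun j => by
    induction j with
    | zero => simp
    | succ j ih => linear_combination (u ^ j) * hx + (-n) * ih
  obtain ⟨k, hk⟩ := hn
  exact (mem_nonZeroDivisors_iff_right.1 (pow_mem (mem_nonZeroDivisors_iff_right.2 hu) k)) x
    (by rw [hpow, neg_pow, hk, mul_zero, mul_zero])

theorem Ideal.Quotient.isNilpotent_or_isUnit {S : Type*} [CommRing S] {I : Ideal S}
    (hI : I.radical.IsMaximal) (a : S ⧸ I) : IsNilpotent a ∨ IsUnit a := by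
  obtain ⟨c, rfl⟩ := Ideal.Quotient.mk_surjective a
  by_cases hc : c ∈ I.radical
  · obtain ⟨k, hk⟩ := hc
    exact .inl ⟨k, by rw [← map_pow, Ideal.Quotient.eq_zero_iff_mem]; exact hk⟩
  · obtain ⟨y, i, ⟨k, hk⟩, hyc⟩ := hI.exists_inv hc
    have hi : IsNilpotent (Ideal.Quotient.mk I i) :=
      ⟨k, by rw [← map_pow, Ideal.Quotient.eq_zero_iff_mem]; exact hk⟩
    refine .inr (isUnit_of_mul_isUnit_right (x := Ideal.Quotient.mk I y) ?_)
    rw [← map_mul, eq_sub_of_add_eq hyc, map_sub, map_one]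
    exact hi.isUnit_one_sub

namespace MvPolynomial

variable {σ : Type*}

theorem mem_nonZeroDivisors_of_not_isNilpotent {T : Type*} [CommRing T]
    (hT : ∀ a : T, IsNilpotent a ∨ IsUnit a) {f : MvPolynomial σ T} (hf : ¬IsNilpotent f) :
    f ∈ (MvPolynomial σ T)⁰ := by
  classical
  obtain ⟨_, _⟩ := exists_wellFoundedGT σ
  -- `f = u + (f - u)`: `u` keeps the unit coefficients, so its leading coefficient is a unit.
  obtain ⟨u, coeff_u⟩ : ∃ u : MvPolynomial σ T,
      ∀ m, coeff m u = if IsNilpotent (coeff m f) then 0 else coeff m f := by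
    refine ⟨∑ m ∈ f.support with ¬IsNilpotent (coeff m f), monomial m (coeff m f), fun m => ?_⟩
    by_cases h : IsNilpotent (coeff m f)
    · simp [coeff_sum, coeff_monomial, h]
    · simpa [coeff_sum, coeff_monomial, h] using fun h0 : coeff m f = 0 => h0.symm
  have hn : IsNilpotent (f - u) := isNilpotent_iff.2 fun m => by
    rw [coeff_sub, coeff_u]
    split_ifs with h
    · simpa using h
    · simp
  have hu : u ≠ 0 := fun hu => hf (by rwa [hu, sub_zero] at hn)
  have hlc : (MonomialOrder.lex).leadingCoeff u ∈ T⁰ := by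
    have hne := (MonomialOrder.leadingCoeff_ne_zero_iff (m := .lex)).2 hu
    rw [MonomialOrder.leadingCoeff, coeff_u] at hne ⊢
    split_ifs at hne ⊢ with h
    · exact absurd rfl hne
    · exact ((hT _).resolve_left h).mem_nonZeroDivisors
  have hu' : u ∈ (MvPolynomial σ T)⁰ :=
    MonomialOrder.mem_nonZeroDivisors_of_leadingCoeff_mem_nonZeroDivisors hlc
  have hsum : u + (f - u) ∈ (MvPolynomial σ T)⁰ := add_mem_nonZeroDivisors_of_isNilpotent hu' hn
  rwa [add_sub_cancel u f] at hsum

variable {S : Type*} [CommRing S] {I : Ideal S}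

theorem map_quotient_mk_eq_zero_iff {p : MvPolynomial σ S} :
    map (Ideal.Quotient.mk I) p = 0 ↔ p ∈ I.map C := by
  rw [← RingHom.mem_ker, ker_map, Ideal.mk_ker]

theorem mem_map_C_of_mul_mem (hI : I.radical.IsMaximal) {g y : MvPolynomial σ S}
    (hg : g ∉ I.radical.map C) (hgy : g * y ∈ I.map C) : y ∈ I.map C := by
  have hg' : ¬IsNilpotent (map (Ideal.Quotient.mk I) g) := fun h =>
    hg <| mem_map_C_iff.2 fun m => by
      obtain ⟨k, hk⟩ := isNilpotent_iff.1 h m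
      rw [coeff_map, ← map_pow, Ideal.Quotient.eq_zero_iff_mem] at hk
      exact ⟨k, hk⟩
  rw [← map_quotient_mk_eq_zero_iff] at hgy ⊢
  rw [map_mul] at hgy
  exact (mul_left_mem_nonZeroDivisors_eq_zero_iff
    (mem_nonZeroDivisors_of_not_isNilpotent (Ideal.Quotient.isNilpotent_or_isUnit hI) hg')).1 hgy

variable {τ : Type*}

theorem map_rename_inl_eq_comap (J : Ideal (MvPolynomial σ S)) :
    J.map (rename (R := S) (Sum.inl : σ → σ ⊕ τ)) = (J.map C).comap
      ((renameEquiv S (Equiv.sumComm σ τ)).toRingEquiv.trans (sumRingEquiv S τ σ)) := by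
  set e := (renameEquiv S (Equiv.sumComm σ τ)).toRingEquiv.trans (sumRingEquiv S τ σ)
  have he : (e.symm : MvPolynomial τ (MvPolynomial σ S) →+* _).comp C =
      (rename Sum.inl : MvPolynomial σ S →ₐ[S] MvPolynomial (σ ⊕ τ) S).toRingHom := by
    apply ringHom_ext
    · intro a; simp [e]
    · intro j; simp [e]
  rw [← Ideal.map_symm, ← Ideal.map_coe e.symm, Ideal.map_map, he]
  rfl

theorem mem_map_rename_inl_of_mul_mem {J : Ideal (MvPolynomial σ S)} (hJ : J.radical.IsMaximal)
    {g y : MvPolynomial (σ ⊕ τ) S} (hg : g ∉ J.radical.map (rename Sum.inl))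
    (hgy : g * y ∈ J.map (rename Sum.inl)) : y ∈ J.map (rename Sum.inl) := by
  rw [map_rename_inl_eq_comap, Ideal.mem_comap] at hg hgy ⊢
  rw [map_mul] at hgy
  exact mem_map_C_of_mul_mem hJ hg hgy

theorem span_range_X_eq_ker_constantCoeff {R : Type*} [CommSemiring R] :
    Ideal.span (Set.range (X : σ → MvPolynomial σ R)) = RingHom.ker constantCoeff := by
  ext p
  rw [← Set.image_univ, mem_ideal_span_X_image, RingHom.mem_ker, constantCoeff_eq]
  simp only [Set.mem_univ, true_and]
  refine ⟨fun h => by_contra fun h0 => ?_, fun h m hm => by_contra fun hm0 => ?_⟩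
  · obtain ⟨i, hi⟩ := h 0 (mem_support_iff.2 h0)
    exact hi rfl
  · push Not at hm0
    exact mem_support_iff.1 hm (by rwa [show m = 0 from Finsupp.ext hm0])

variable {k : Type*} [Field k]

theorem isMaximal_span_range_X : (Ideal.span (Set.range (X : σ → MvPolynomial σ k))).IsMaximal :=
  span_range_X_eq_ker_constantCoeff (R := k) ▸
    RingHom.ker_isMaximal_of_surjective _ fun a => ⟨C a, constantCoeff_C σ a⟩

theorem radical_pow_span_range_X_pow {e n : ℕ} (he : e ≠ 0) (hn : n ≠ 0) :
    ((Ideal.span (Set.range fun j => (X j : MvPolynomial σ k) ^ e)) ^ n).radical =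
      Ideal.span (Set.range X) := by
  refine le_antisymm ((isMaximal_span_range_X (k := k)).isPrime.radical_le_iff.2 ?_) ?_
  · refine (Ideal.pow_le_self hn).trans (Ideal.span_le.2 ?_)
    rintro _ ⟨j, rfl⟩
    exact Ideal.pow_mem_of_mem _ (Ideal.subset_span (Set.mem_range_self j)) e
      (Nat.pos_of_ne_zero he)
  · refine Ideal.span_le.2 ?_
    rintro _ ⟨j, rfl⟩
    exact ⟨e * n, by
      rw [pow_mul]; exact Ideal.pow_mem_pow (Ideal.subset_span (Set.mem_range_self j)) n⟩

end MvPolynomial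

section

variable {k : Type*} [Field k]

theorem prod_vx_notMem_span_range_va (m r : ℕ) (i : Fin m) :
    ∏ j, vx (k := k) m r i j ∉ Ideal.span (Set.range (va m r)) := by
  have hle : Ideal.span (Set.range (va (k := k) m r)) ≤
      RingHom.ker (aeval (Sum.elim 0 1 : Var m r → k)) :=
    Ideal.span_le.2 (by rintro _ ⟨j, rfl⟩; simp [va])
  intro h
  simpa [vx] using hle h

theorem span_range_va_le_radical (m r n : ℕ) :
    Ideal.span (Set.range (va (k := k) m r)) ≤
      ((Ideal.span (Set.range fun j => va (k := k) m r j ^ 4)) ^ n).radical := by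
  refine Ideal.span_le.2 ?_
  rintro _ ⟨j, rfl⟩
  exact ⟨4 * n, by
    rw [pow_mul]; exact Ideal.pow_mem_pow (Ideal.subset_span (Set.mem_range_self j)) n⟩

theorem mem_pow_span_va_pow_four_of_mul_mem {m r n : ℕ} (hn : n ≠ 0)
    {g y : MvPolynomial (Var m r) k} (hg : g ∉ Ideal.span (Set.range (va m r)))
    (hgy : g * y ∈ (Ideal.span (Set.range fun j => va m r j ^ 4)) ^ n) :
    y ∈ (Ideal.span (Set.range fun j => va m r j ^ 4)) ^ n := by
  set A₀ := Ideal.span (Set.range fun j => (X j : MvPolynomial (Fin r) k) ^ 4)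
  have hrad : (A₀ ^ n).radical = Ideal.span (Set.range X) :=
    radical_pow_span_range_X_pow four_ne_zero hn
  have hA : (Ideal.span (Set.range fun j => va (k := k) m r j ^ 4)) ^ n =
      (A₀ ^ n).map (rename Sum.inl) := by
    simp [A₀, Ideal.map_pow, Ideal.map_span, ← Set.range_comp, Function.comp_def, va]
  have hQ : Ideal.span (Set.range (va (k := k) m r)) = (A₀ ^ n).radical.map (rename Sum.inl) := by
    rw [hrad, Ideal.map_span, ← Set.range_comp]
    simp only [Function.comp_def, rename_X]
    rfl
  rw [hA] at hgy ⊢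
  rw [hQ] at hg
  exact mem_map_rename_inl_of_mul_mem (hrad ▸ isMaximal_span_range_X) hg hgy

namespace BHH

theorem le_span_va_pow_four (m r : ℕ) [NeZero r] :
    BHH (k := k) m r ≤ Ideal.span (Set.range fun j => va m r j ^ 4) := by
  have hdvd : ∀ j p, va (k := k) m r j ^ 4 ∣ p → p ∈ Ideal.span (Set.range fun j => va m r j ^ 4) :=
    fun j _ h => Ideal.mem_of_dvd _ h (Ideal.subset_span (Set.mem_range_self j))
  refine Ideal.span_le.2 ?_
  rintro p (((⟨j, rfl⟩ | ⟨j, rfl⟩) | rfl) | ⟨⟨i, j⟩, rfl⟩)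
  · exact hdvd j _ (pow_dvd_pow _ (by norm_num))
  · exact hdvd j _ (dvd_mul_of_dvd_left (pow_dvd_pow _ (by norm_num)) _)
  · exact hdvd 0 _ (dvd_mul_of_dvd_right (Finset.dvd_prod_of_mem _ (Finset.mem_univ 0)) _)
  · exact hdvd j _ (dvd_mul_of_dvd_left (dvd_mul_right _ _) _)

theorem va_pow_four_mul_prod_vx_sq_mem (m r : ℕ) (i : Fin m) (j : Fin (r + 2)) :
    va (k := k) m (r + 2) j ^ 4 * (∏ l, vx m (r + 2) i l) ^ 2 ∈ BHH m (r + 2) := by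
  have hj : j + 1 ≠ j := by
    intro h
    have := Fin.one_eq_zero_iff.1 (add_eq_left.1 h)
    omega
  have hgen_dvd :
      hgen (k := k) m (r + 2) i j ∣ va m (r + 2) j ^ 4 * (∏ l, vx m (r + 2) i l) ^ 2 := by
    rw [← Finset.mul_prod_erase _ _ (Finset.mem_univ j),
      ← Finset.mul_prod_erase _ _ (Finset.mem_erase.2 ⟨hj, Finset.mem_univ (j + 1)⟩), hgen]
    exact ⟨vx m (r + 2) i j * (∏ l ∈ (Finset.univ.erase j).erase (j + 1), vx m (r + 2) i l) ^ 2,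
      by ring⟩
  exact Ideal.mem_of_dvd _ hgen_dvd
    (Ideal.subset_span (Set.mem_union_right _ (Set.mem_range_self (i, j))))

theorem span_va_pow_four_mul_le (m r : ℕ) (i : Fin m) :
    Ideal.span (Set.range fun j => va (k := k) m (r + 2) j ^ 4) *
        Ideal.span {(∏ l, vx m (r + 2) i l) ^ 2} ≤ BHH m (r + 2) := by
  rw [Ideal.span_mul_span', Ideal.span_le]
  rintro _ ⟨_, ⟨j, rfl⟩, _, rfl, rfl⟩
  exact va_pow_four_mul_prod_vx_sq_mem m r i j

end BHH

end

theorem stmt16_general {k : Type*} [Field k] (m r n : ℕ) (hn : 1 ≤ n) (i : Fin m) :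
    (⨆ t : ℕ, ((BHH (k := k) m (r + 2)) ^ n).colon
        ((Ideal.span {(∏ j : Fin (r + 2), vx m (r + 2) i j) ^ t} : Ideal (MvPolynomial (Var m (r + 2)) k)) : Set (MvPolynomial (Var m (r + 2)) k)))
      = (Ideal.span (Set.range fun j : Fin (r + 2) => va (k := k) m (r + 2) j ^ 4)) ^ n ∧
    ∀ P ∈ associatedPrimes (MvPolynomial (Var m (r + 2)) k)
        (MvPolynomial (Var m (r + 2)) k ⧸ (BHH (k := k) m (r + 2)) ^ n),
      (∏ j : Fin (r + 2), vx (k := k) m (r + 2) i j) ∉ P →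
        P = Ideal.span (Set.range (va (k := k) m (r + 2))) := by
  have hprimary : ∀ g ∉ Ideal.span (Set.range (va (k := k) m (r + 2))), ∀ y,
      g * y ∈ (Ideal.span (Set.range fun j => va m (r + 2) j ^ 4)) ^ n →
        y ∈ (Ideal.span (Set.range fun j => va m (r + 2) j ^ 4)) ^ n :=
    fun _ hg _ => mem_pow_span_va_pow_four_of_mul_mem (by omega) hg
  have hBA := Ideal.pow_right_mono (BHH.le_span_va_pow_four (k := k) m (r + 2)) n
  have hAB : (Ideal.span (Set.range fun j => va (k := k) m (r + 2) j ^ 4)) ^ n *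
      Ideal.span {(∏ j, vx m (r + 2) i j) ^ (2 * n)} ≤ BHH m (r + 2) ^ n := by
    rw [pow_mul, ← Ideal.span_singleton_pow, ← mul_pow]
    exact Ideal.pow_right_mono (BHH.span_va_pow_four_mul_le m r i) n
  exact ⟨Ideal.iSup_colon_span_pow_eq hprimary (prod_vx_notMem_span_range_va m (r + 2) i) hBA hAB,
    fun P hP hfP => Ideal.eq_of_mem_associatedPrimes_quotient hprimary
      (span_range_va_le_radical m (r + 2) n) hBA hAB hP hfP⟩

/-- The saturation `B^n : (x_{i,1} ⋯ x_{i,r})^∞` equals `(a_1^4, …, a_r^4)^n`; in particular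
any associated prime of `B^n` not containing `x_{i,1} ⋯ x_{i,r}` equals `(a_1, …, a_r)`. -/
theorem stmt16 {k : Type*} [Field k] (m r n : ℕ) (hm : 1 ≤ m) (hn : 1 ≤ n) (i : Fin m) :
    (⨆ t : ℕ, ((BHH (k := k) m (r + 2)) ^ n).colon
        ((Ideal.span {(∏ j : Fin (r + 2), vx m (r + 2) i j) ^ t} : Ideal (MvPolynomial (Var m (r + 2)) k)) : Set (MvPolynomial (Var m (r + 2)) k)))
      = (Ideal.span (Set.range fun j : Fin (r + 2) => va (k := k) m (r + 2) j ^ 4)) ^ n ∧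
    ∀ P ∈ associatedPrimes (MvPolynomial (Var m (r + 2)) k)
        (MvPolynomial (Var m (r + 2)) k ⧸ (BHH (k := k) m (r + 2)) ^ n),
      (∏ j : Fin (r + 2), vx (k := k) m (r + 2) i j) ∉ P →
        P = Ideal.span (Set.range (va (k := k) m (r + 2))) :=
  stmt16_general m r n hn i
end

section
/- Let P be an associated prime of B^n (B = BHH(m,r,1)) and suppose there exist i ∈ [m] and j ∈ [r] with x_{i,j} ∉ P and x_{i,j+1} ∉ P (indices mod r). Then c ∉ P. -/
/-!
Write `B = (c v) + J` with `v = a_1^4 ⋯ a_r^4` and `J` generated by the remaining generators.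
None of these involves `c`, so `c` is a nonzerodivisor modulo `J^n`, and `u = x_{i,j} x_{i,j+1}^2`
satisfies `u v ∈ J` because of `h_{i,j}`. If `c f ∈ B^n`, then `c f ≡ c v h (mod J^n)` for some
`h ∈ B^(n-1)`, hence `f ≡ v h` and `u f ≡ (u v) h ≡ 0 (mod B^n)`. Iterating, `c^t f ∈ B^n` forces
`u^t f ∈ B^n`, so an associated prime of `B^n` containing `c` contains `u`, hence `x_{i,j}` or
`x_{i,j+1}`.
-/

open MvPolynomial

namespace Ideal

theorem sup_pow_succ_le {R : Type*} [CommSemiring R] (I J : Ideal R) (n : ℕ) :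
    (I ⊔ J) ^ (n + 1) ≤ I * (I ⊔ J) ^ n ⊔ J ^ (n + 1) := by
  induction n with
  | zero => simp
  | succ n ih =>
    calc (I ⊔ J) ^ (n + 2) = (I ⊔ J) ^ (n + 1) * I ⊔ (I ⊔ J) ^ (n + 1) * J := by
          rw [pow_succ, mul_sup]
      _ ≤ I * (I ⊔ J) ^ (n + 1) ⊔ (I * (I ⊔ J) ^ n ⊔ J ^ (n + 1)) * J := by
          rw [mul_comm _ I]; exact sup_le_sup_left (mul_mono_left ih) _
      _ ≤ I * (I ⊔ J) ^ (n + 1) ⊔ J ^ (n + 2) := by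
          rw [sup_mul, mul_assoc, ← pow_succ J]
          refine sup_le le_sup_left (sup_le ?_ le_sup_right)
          exact le_sup_of_le_left
            (mul_mono_right ((mul_mono_right le_sup_right).trans_eq (pow_succ _ _).symm))

variable {R : Type*} [CommRing R]

theorem mul_mem_span_mul_sup_pow {J : Ideal R} {c v u f : R} {n : ℕ} (huv : u * v ∈ J)
    (hc : ∀ g, c * g ∈ J ^ n → g ∈ J ^ n) (hf : c * f ∈ (span {c * v} ⊔ J) ^ n) :
    u * f ∈ (span {c * v} ⊔ J) ^ n := by
  cases n with
  | zero => simp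
  | succ n =>
    obtain ⟨p, hp, q, hq, hpq⟩ := Submodule.mem_sup.1 (sup_pow_succ_le _ _ n hf)
    obtain ⟨h, hh, rfl⟩ := mem_span_singleton_mul.1 hp
    have hfh : f - v * h ∈ J ^ (n + 1) := hc _ (by convert hq using 1; linear_combination -hpq)
    have huvh : u * v * h ∈ (span {c * v} ⊔ J) ^ (n + 1) := by
      rw [pow_succ']; exact mul_mem_mul (mem_sup_right huv) hh
    have hufh : u * (f - v * h) ∈ (span {c * v} ⊔ J) ^ (n + 1) :=
      mul_mem_left _ u (pow_right_mono le_sup_right _ hfh)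
    convert add_mem huvh hufh using 1
    ring

theorem mem_of_mem_associatedPrimes_quotient {I P : Ideal R}
    (hP : P ∈ associatedPrimes R (R ⧸ I)) {c u : R} (hcu : ∀ f, c * f ∈ I → u * f ∈ I)
    (hc : c ∈ P) : u ∈ P := by
  obtain ⟨x, rfl⟩ := hP.eq_radical_colon
  obtain ⟨f, rfl⟩ := Quotient.mk_surjective x
  have hmem : ∀ g, g ∈ (⊥ : Submodule R (R ⧸ I)).colon {Quotient.mk I f} ↔ g * f ∈ I := by
    intro g
    rw [Submodule.mem_colon_singleton, Submodule.mem_bot, Algebra.smul_def,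
      Quotient.algebraMap_eq, ← map_mul, Quotient.eq_zero_iff_mem]
  have hpow : ∀ t g, c ^ t * g ∈ I → u ^ t * g ∈ I := by
    intro t
    induction t with
    | zero => simp
    | succ t ih =>
      intro g hg
      rw [pow_succ', mul_assoc] at hg ⊢
      exact hcu _ (by rw [mul_left_comm]; exact ih _ (by rwa [mul_left_comm]))
  obtain ⟨t, hct⟩ := hc
  exact ⟨t, (hmem _).2 (hpow t f ((hmem _).1 hct))⟩

end Ideal

theorem Polynomial.mem_map_C_of_X_mul_mem {R : Type*} [CommSemiring R] {I : Ideal R}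
    {g : Polynomial R} (h : Polynomial.X * g ∈ I.map Polynomial.C) : g ∈ I.map Polynomial.C := by
  rw [Ideal.mem_map_C_iff] at h ⊢
  intro d
  simpa [Polynomial.coeff_X_mul] using h (d + 1)

namespace MvPolynomial

variable {σ R : Type*} [CommSemiring R]

theorem mem_map_rename_of_X_mul_mem [DecidableEq σ] {s : σ}
    {I : Ideal (MvPolynomial {t // t ≠ s} R)} {g : MvPolynomial σ R}
    (h : X s * g ∈ I.map (rename Subtype.val)) : g ∈ I.map (rename Subtype.val) := by
  let φ : MvPolynomial σ R ≃+* Polynomial (MvPolynomial {t // t ≠ s} R) :=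
    ((renameEquiv R (Equiv.optionSubtypeNe s).symm).trans (optionEquivLeft R _)).toRingEquiv
  have hφC : (φ : MvPolynomial σ R →+* _).comp
      (rename (Subtype.val : {t // t ≠ s} → σ)).toRingHom = Polynomial.C := by
    refine ringHom_ext (fun a ↦ ?_) (fun t ↦ ?_)
    · simp [φ, optionEquivLeft_C]
    · simp [φ, Equiv.optionSubtypeNe_symm_of_ne t.2, optionEquivLeft_X_some]
  have hφX : φ (X s) = Polynomial.X := by
    simp [φ, optionEquivLeft_X_none]
  have hmap : (I.map (rename Subtype.val)).map (φ : MvPolynomial σ R →+* _) =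
      I.map Polynomial.C := by
    change (I.map (rename Subtype.val).toRingHom).map _ = _
    rw [Ideal.map_map, hφC]
  have hφg : φ g ∈ I.map Polynomial.C := by
    refine Polynomial.mem_map_C_of_X_mul_mem ?_
    rw [← hφX, ← map_mul, ← hmap]
    exact Ideal.mem_map_of_mem _ h
  rw [← hmap] at hφg
  simpa using Ideal.mem_map_of_mem (φ.symm : Polynomial _ →+* MvPolynomial σ R) hφg

theorem mem_pow_span_of_X_mul_mem {s : σ} {G : Set (MvPolynomial σ R)}
    (hG : G ⊆ supported R {s}ᶜ) {n : ℕ} {g : MvPolynomial σ R}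
    (h : X s * g ∈ Ideal.span G ^ n) : g ∈ Ideal.span G ^ n := by
  classical
  have hG' : G = rename Subtype.val '' (rename (Subtype.val : {t // t ≠ s} → σ) ⁻¹' G) := by
    refine (Set.image_preimage_eq_of_subset fun p hp ↦ ?_).symm
    exact exists_rename_eq_of_vars_subset_range p _ Subtype.val_injective
      fun t ht ↦ ⟨⟨t, mem_supported.1 (hG hp) ht⟩, rfl⟩
  rw [hG', ← Ideal.map_span, ← Ideal.map_pow] at h ⊢
  exact mem_map_rename_of_X_mul_mem h

end MvPolynomial

section BHH

open Ideal

variable {k : Type*} [Field k] (m r : ℕ) [NeZero r]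

noncomputable def bhhCFreeGens : Set (MvPolynomial (Var m r) k) :=
  (Set.range fun j : Fin r => va m r j ^ 6) ∪
    (Set.range fun j : Fin r => va m r j ^ 5 * va m r (j + 1)) ∪
    (Set.range fun p : Fin m × Fin r => hgen m r p.1 p.2)

theorem BHH_eq_span_sup :
    BHH (k := k) m r = span {vc m r * ∏ j, va m r j ^ 4} ⊔ span (bhhCFreeGens m r) := by
  rw [BHH, bhhCFreeGens]
  simp only [span_union]
  ac_rfl

theorem bhhCFreeGens_subset_supported :
    bhhCFreeGens (k := k) m r ⊆ supported k ({Sum.inr (Sum.inl ())}ᶜ : Set (Var m r)) := by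
  have hva (j : Fin r) : va (k := k) m r j ∈ supported k {Sum.inr (Sum.inl ())}ᶜ :=
    X_mem_supported.2 (by simp)
  have hvx (i : Fin m) (j : Fin r) : vx (k := k) m r i j ∈ supported k {Sum.inr (Sum.inl ())}ᶜ :=
    X_mem_supported.2 (by simp)
  rintro p ((⟨j, rfl⟩ | ⟨j, rfl⟩) | ⟨⟨i, j⟩, rfl⟩)
  · exact pow_mem (hva j) 6
  · exact mul_mem (pow_mem (hva j) 5) (hva _)
  · exact mul_mem (mul_mem (pow_mem (hva j) 4) (hvx i j)) (pow_mem (hvx _ _) 2)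

theorem vx_mul_vx_sq_mul_prod_mem_span (i : Fin m) (j : Fin r) :
    vx (k := k) m r i j * vx m r i (j + 1) ^ 2 * ∏ j', va m r j' ^ 4 ∈
      span (bhhCFreeGens m r) := by
  have hmem : hgen (k := k) m r i j ∈ span (bhhCFreeGens m r) :=
    subset_span (Or.inr ⟨(i, j), rfl⟩)
  rw [← Finset.mul_prod_erase _ _ (Finset.mem_univ j)]
  convert mul_mem_left _ (∏ j' ∈ Finset.univ.erase j, va m r j' ^ 4) hmem using 1
  rw [hgen]
  ring

theorem vx_mul_vx_sq_mul_mem_BHH_pow {n : ℕ} (i : Fin m) (j : Fin r)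
    {f : MvPolynomial (Var m r) k}
    (h : vc m r * f ∈ BHH m r ^ n) : vx m r i j * vx m r i (j + 1) ^ 2 * f ∈ BHH m r ^ n := by
  rw [BHH_eq_span_sup] at h ⊢
  exact mul_mem_span_mul_sup_pow (vx_mul_vx_sq_mul_prod_mem_span m r i j)
    (fun _ ↦ mem_pow_span_of_X_mul_mem (bhhCFreeGens_subset_supported m r)) h

end BHH

theorem stmt18_general {k : Type*} [Field k] (m r n : ℕ)
    (P : Ideal (MvPolynomial (Var m (r + 2)) k))
    (hP : P ∈ associatedPrimes (MvPolynomial (Var m (r + 2)) k)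
      (MvPolynomial (Var m (r + 2)) k ⧸ (BHH (k := k) m (r + 2)) ^ n))
    (i : Fin m) (j : Fin (r + 2))
    (hx1 : vx (k := k) m (r + 2) i j ∉ P)
    (hx2 : vx (k := k) m (r + 2) i (j + 1) ∉ P) :
    vc (k := k) m (r + 2) ∉ P := by
  intro hc
  have hu : vx m (r + 2) i j * vx m (r + 2) i (j + 1) ^ 2 ∈ P :=
    Ideal.mem_of_mem_associatedPrimes_quotient hP
      (fun _ ↦ vx_mul_vx_sq_mul_mem_BHH_pow m (r + 2) i j) hc
  rcases hP.isPrime.mem_or_mem hu with h | h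
  exacts [hx1 h, hx2 (hP.isPrime.mem_of_pow_mem 2 h)]

theorem stmt18 {k : Type*} [Field k] (m r n : ℕ) (hm : 1 ≤ m) (hn : 1 ≤ n)
    (P : Ideal (MvPolynomial (Var m (r + 2)) k))
    (hP : P ∈ associatedPrimes (MvPolynomial (Var m (r + 2)) k)
      (MvPolynomial (Var m (r + 2)) k ⧸ (BHH (k := k) m (r + 2)) ^ n))
    (i : Fin m) (j : Fin (r + 2))
    (hx1 : vx (k := k) m (r + 2) i j ∉ P)
    (hx2 : vx (k := k) m (r + 2) i (j + 1) ∉ P) :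
    vc (k := k) m (r + 2) ∉ P :=
  stmt18_general m r n P hP i j hx1 hx2
end
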